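/- Let G' be a finite simple graph with vertex set U', let U ⊆ U', and let J be a set of edges with both endpoints in U. Suppose that the graph G'[U] ∪ J (the subgraph of G' induced by U, together with the edges of J) is k-connected, and that for every edge uv ∈ J the graph G' contains k internally-disjoint u–v paths. Then G' is k-U-connected, i.e., G' contains k internally-disjoint paths between every pair of nodes of U. -/

import Mathlib

open SimpleGraph

/-- `HasIDPaths G u v k` : the graph `G` contains `k` pairwise internally disjoint
`u`-`v` paths, i.e. `k` distinct paths sharing no vertices other than `u` and `v`. -/
def HasIDPaths {V : Type*} (G : SimpleGraph V) (u v : V) (k : ℕ) : Prop :=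
  ∃ P : Fin k → G.Path u v, Function.Injective P ∧
    ∀ i j, i ≠ j → ∀ w, w ∈ (P i).val.support → w ∈ (P j).val.support → w = u ∨ w = v

/-- `KConnected G k` : `G` has `k` internally disjoint paths between every pair of nodes. -/
def KConnected {V : Type*} (G : SimpleGraph V) (k : ℕ) : Prop :=
  ∀ u v : V, u ≠ v → HasIDPaths G u v k

namespace MengerAux

open SimpleGraph Walk

variable {V : Type*}

/-- `S` separates `A` from `B` in `G`: every `A`-`B` walk meets `S`. -/
def Sep (G : SimpleGraph V) (A B S : Set V) : Prop :=
  ∀ a b, a ∈ A → b ∈ B → ∀ W : G.Walk a b, ∃ s ∈ S, s ∈ W.support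

/-- `k` pairwise (vertex-)disjoint walks from `A` to `B` in `G`. -/
def DisjWalks (G : SimpleGraph V) (A B : Set V) (k : ℕ) : Prop :=
  ∃ (a b : Fin k → V) (W : ∀ i, G.Walk (a i) (b i)),
    (∀ i, a i ∈ A) ∧ (∀ i, b i ∈ B) ∧
    ∀ i j, i ≠ j → ∀ w, w ∈ (W i).support → w ∈ (W j).support → False

lemma exists_inj_of_le_ncard {s : Set V} {k : ℕ} (h : k ≤ s.ncard) (hfin : s.Finite) :
    ∃ f : Fin k → V, Function.Injective f ∧ ∀ i, f i ∈ s := by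
  classical
  have h' : k ≤ hfin.toFinset.card := by rwa [Set.ncard_eq_toFinset_card _ hfin] at h
  obtain ⟨t, hts, htc⟩ := Finset.exists_subset_card_eq h'
  refine ⟨fun i => (t.equivFin.symm (Fin.cast htc.symm i) : V), ?_, ?_⟩
  · intro i j hij
    have := t.equivFin.symm.injective (Subtype.ext hij)
    simpa [Fin.ext_iff] using congrArg Fin.val this
  · intro i
    have := (t.equivFin.symm (Fin.cast htc.symm i)).2
    exact hfin.mem_toFinset.mp (hts this)

lemma surj_of_inj_ncard {X : Set V} {k : ℕ} (hX : X.ncard = k) (hfin : X.Finite)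
    (f : Fin k → V) (hinj : Function.Injective f) (hmem : ∀ i, f i ∈ X) :
    ∀ x ∈ X, ∃ i, f i = x := by
  classical
  have himg : (Finset.univ.image f) ⊆ hfin.toFinset := by
    intro x hx
    obtain ⟨i, _, rfl⟩ := Finset.mem_image.mp hx
    exact hfin.mem_toFinset.mpr (hmem i)
  have hcard : (Finset.univ.image f).card = hfin.toFinset.card := by
    rw [Finset.card_image_of_injective _ hinj, Finset.card_univ, Fintype.card_fin,
      ← Set.ncard_eq_toFinset_card _ hfin, hX]
  have heq := Finset.eq_of_subset_of_card_le himg (le_of_eq hcard.symm)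
  intro x hx
  have : x ∈ Finset.univ.image f := heq ▸ hfin.mem_toFinset.mpr hx
  obtain ⟨i, _, hi⟩ := Finset.mem_image.mp this
  exact ⟨i, hi⟩

lemma exists_firstHit {G : SimpleGraph V} {X : Set V} :
    ∀ {a b : V} (W : G.Walk a b), (∃ z ∈ W.support, z ∈ X) →
    ∃ (z : V) (_ : z ∈ X) (W' : G.Walk a z),
      (∀ t ∈ W'.support, t ∈ W.support) ∧ (∀ e ∈ W'.edges, e ∈ W.edges) ∧
      (∀ t ∈ W'.support, t ∈ X → t = z) := by
  intro a b W
  induction W with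
  | nil =>
    rintro ⟨z, hz, hzX⟩
    simp only [support_nil, List.mem_singleton] at hz
    subst hz
    exact ⟨z, hzX, Walk.nil, by simp, by simp, by simp⟩
  | @cons a c b h W ih =>
    rintro ⟨z, hz, hzX⟩
    by_cases haX : a ∈ X
    · exact ⟨a, haX, Walk.nil, by simp, by simp, fun t ht _ => by simpa using ht⟩
    · have hzW : z ∈ W.support := by
        simp only [support_cons, List.mem_cons] at hz
        rcases hz with rfl | hz
        · exact absurd hzX haX
        · exact hz
      obtain ⟨z', hz'X, W', hsub, hesub, hfirst⟩ := ih ⟨z, hzW, hzX⟩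
      refine ⟨z', hz'X, Walk.cons h W', ?_, ?_, ?_⟩
      · intro t ht
        simp only [support_cons, List.mem_cons] at ht ⊢
        rcases ht with rfl | ht
        · exact Or.inl rfl
        · exact Or.inr (hsub t ht)
      · intro e he
        simp only [edges_cons, List.mem_cons] at he ⊢
        rcases he with rfl | he
        · exact Or.inl rfl
        · exact Or.inr (hesub e he)
      · intro t ht htX
        simp only [support_cons, List.mem_cons] at ht
        rcases ht with rfl | ht
        · exact absurd htX haX
        · exact hfirst t ht htX

lemma walk_toDeleteEdges {G : SimpleGraph V} (D : Set (Sym2 V)) :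
    ∀ {a b : V} (W : G.Walk a b), (∀ e ∈ W.edges, e ∉ D) →
    ∃ W' : (G.deleteEdges D).Walk a b, W'.support = W.support := by
  intro a b W
  induction W with
  | nil => exact fun _ => ⟨Walk.nil, rfl⟩
  | @cons a c b h W ih =>
    intro hE
    obtain ⟨W', hW'⟩ := ih (fun e he => hE e (by simp [he]))
    have hadj : (G.deleteEdges D).Adj a c := by
      rw [deleteEdges_adj]
      exact ⟨h, hE _ (by simp)⟩
    exact ⟨Walk.cons hadj W', by simp [hW']⟩

lemma path_eq_edge {G : SimpleGraph V} {u v : V} {W : G.Walk u v} (hW : W.IsPath)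
    (he : s(u, v) ∈ W.edges) : ∃ h : G.Adj u v, W = Walk.cons h Walk.nil := by
  cases W with
  | nil => simp at he
  | @cons _ c _ h W' =>
    rw [Walk.cons_isPath_iff] at hW
    simp only [edges_cons, List.mem_cons] at he
    rcases he with he | he
    · rw [Sym2.eq_iff] at he
      rcases he with ⟨-, rfl⟩ | ⟨rfl, rfl⟩
      · have : W' = Walk.nil := Walk.isPath_iff_eq_nil.mp hW.1
        exact ⟨h, by rw [this]⟩
      · exact absurd (Walk.end_mem_support W') hW.2
    · exact absurd (Walk.fst_mem_support_of_mem_edges W' he) hW.2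

section Contract
variable [DecidableEq V]

def rmap (x y z : V) : V := if z = y then x else z

@[reducible] def contract (G : SimpleGraph V) (x y : V) : SimpleGraph V where
  Adj a b := a ≠ b ∧ ∃ a' b', G.Adj a' b' ∧ rmap x y a' = a ∧ rmap x y b' = b
  symm := ⟨by
    rintro a b ⟨hab, a', b', h, ha, hb⟩
    exact ⟨hab.symm, b', a', h.symm, hb, ha⟩⟩
  loopless := ⟨fun a h => h.1 rfl⟩

lemma rmap_x {x y : V} (h : x ≠ y) : rmap x y x = x := if_neg h
@[simp] lemma rmap_y (x y : V) : rmap x y y = x := if_pos rfl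

lemma rmap_cases {x y a b : V} (hxy : x ≠ y) (ha : rmap x y a = rmap x y b)
    (hne : a ≠ b) : (a = x ∧ b = y) ∨ (a = y ∧ b = x) := by
  unfold rmap at ha
  by_cases h1 : a = y <;> by_cases h2 : b = y
  · exact absurd (h1.trans h2.symm) hne
  all_goals simp [h1, h2] at ha ⊢ <;> tauto

lemma contract_adj_of {G : SimpleGraph V} {x y a b : V} (hxy : G.Adj x y)
    (ha : rmap x y a = rmap x y b) (hne : a ≠ b) : G.Adj a b := by
  rcases rmap_cases hxy.ne ha hne with ⟨rfl, rfl⟩ | ⟨rfl, rfl⟩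
  · exact hxy
  · exact hxy.symm

lemma contract_project {G : SimpleGraph V} {x y : V} :
    ∀ {c d : V} (W : G.Walk c d), ∃ W₁ : (contract G x y).Walk (rmap x y c) (rmap x y d),
      ∀ z ∈ W₁.support, ∃ z' ∈ W.support, rmap x y z' = z := by
  intro c d W
  induction W with
  | nil => exact ⟨Walk.nil, by simp⟩
  | @cons c e d h W ih =>
    obtain ⟨W₁, hW₁⟩ := ih
    by_cases hce : rmap x y c = rmap x y e
    · refine ⟨W₁.copy hce.symm rfl, ?_⟩
      intro z hz
      rw [support_copy] at hz
      obtain ⟨z', hz', hz'r⟩ := hW₁ z hz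
      exact ⟨z', by simp [hz'], hz'r⟩
    · refine ⟨Walk.cons ⟨hce, c, e, h, rfl, rfl⟩ W₁, ?_⟩
      intro z hz
      rw [support_cons, List.mem_cons] at hz
      rcases hz with rfl | hz
      · exact ⟨c, by simp, rfl⟩
      · obtain ⟨z', hz', hz'r⟩ := hW₁ z hz
        exact ⟨z', by simp [hz'], hz'r⟩

lemma contract_lift {G : SimpleGraph V} {x y : V} (hxy : G.Adj x y) :
    ∀ {c d : V} (W₁ : (contract G x y).Walk c d) (c' d' : V),
      rmap x y c' = c → rmap x y d' = d →
      ∃ W : G.Walk c' d', ∀ z ∈ W.support, rmap x y z ∈ W₁.support := by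
  intro c d W₁
  induction W₁ with
  | @nil c =>
    intro c' d' hc hd
    by_cases h : c' = d'
    · subst h
      exact ⟨Walk.nil, by simp [hc]⟩
    · refine ⟨Walk.cons (contract_adj_of hxy (hc.trans hd.symm) h) Walk.nil, ?_⟩
      intro z hz
      simp only [support_cons, support_nil, List.mem_cons, List.mem_singleton] at hz
      rcases hz with rfl | rfl | h
      · simp [hc]
      · simp [hd]
      · exact absurd h (by simp)
  | @cons c e d hadj W₁ ih =>
    intro c' d' hc hd
    obtain ⟨hne, p, q, hpq, hp, hq⟩ := hadj
    obtain ⟨W, hW⟩ := ih q d' hq hd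
    by_cases hcp : c' = p
    · subst hcp
      refine ⟨Walk.cons hpq W, ?_⟩
      intro z hz
      rw [support_cons, List.mem_cons] at hz
      rcases hz with rfl | hz
      · simp [hp, hc]
      · simp [hW z hz]
    · refine ⟨Walk.cons (contract_adj_of hxy (hc.trans hp.symm) hcp) (Walk.cons hpq W), ?_⟩
      intro z hz
      simp only [support_cons, List.mem_cons] at hz
      rcases hz with rfl | rfl | hz
      · simp [hc]
      · simp [hp]
      · simp [hW z hz]

lemma contract_edge_lt [Fintype V] {G : SimpleGraph V} {x y : V} (hxy : G.Adj x y) :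
    (contract G x y).edgeSet.ncard < G.edgeSet.ncard := by
  have hsub : (contract G x y).edgeSet ⊆ Sym2.map (rmap x y) '' (G.edgeSet \ {s(x, y)}) := by
    intro e he
    induction e with
    | h a b =>
      obtain ⟨hne, a', b', h', ha, hb⟩ := (mem_edgeSet _).mp he
      refine ⟨s(a', b'), ⟨(mem_edgeSet _).mpr h', ?_⟩, by rw [Sym2.map_pair_eq, ha, hb]⟩
      intro hmem
      rw [Set.mem_singleton_iff, Sym2.eq_iff] at hmem
      apply hne
      rcases hmem with ⟨rfl, rfl⟩ | ⟨rfl, rfl⟩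
      · rw [← ha, ← hb, rmap_x hxy.ne, rmap_y]
      · rw [← ha, ← hb, rmap_x hxy.ne, rmap_y]
  calc (contract G x y).edgeSet.ncard
      ≤ (Sym2.map (rmap x y) '' (G.edgeSet \ {s(x, y)})).ncard :=
        Set.ncard_le_ncard hsub (Set.toFinite _)
    _ ≤ (G.edgeSet \ {s(x, y)}).ncard := Set.ncard_image_le (Set.toFinite _)
    _ < G.edgeSet.ncard :=
        Set.ncard_diff_singleton_lt_of_mem ((mem_edgeSet _).mpr hxy) (Set.toFinite _)

lemma exists_walk_le {G H : SimpleGraph V} (h : G ≤ H) {a b : V} (W : G.Walk a b) :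
    ∃ W' : H.Walk a b, W'.support = W.support := by
  refine ⟨W.map (Hom.ofLE h), ?_⟩
  rw [Walk.support_map]
  have : ⇑(Hom.ofLE h) = id := rfl
  rw [this, List.map_id]

lemma not_mem_takeUntil {G : SimpleGraph V} {a b w : V} {p : G.Walk a b}
    (hp : p.IsPath) (hw : w ∈ p.support) (hbw : b ≠ w) :
    b ∉ (p.takeUntil w hw).support := by
  intro hb
  have hnd := hp.support_nodup
  rw [← take_spec p hw, support_append, List.nodup_append] at hnd
  have hbd : b ∈ (p.dropUntil w hw).support.tail := by
    have h2 := end_mem_support (p.dropUntil w hw)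
    rw [support_eq_cons, List.mem_cons] at h2
    rcases h2 with h2 | h2
    · exact absurd h2 hbw
    · exact h2
  exact hnd.2.2 b hb b hbd rfl

lemma not_mem_dropUntil {G : SimpleGraph V} {a b w : V} {p : G.Walk a b}
    (hp : p.IsPath) (hw : w ∈ p.support) (haw : a ≠ w) :
    a ∉ (p.dropUntil w hw).support := by
  intro ha
  have hnd := hp.support_nodup
  rw [← take_spec p hw, support_append, List.nodup_append] at hnd
  have had : a ∈ (p.dropUntil w hw).support.tail := by
    have h2 := ha
    rw [support_eq_cons, List.mem_cons] at h2
    rcases h2 with h2 | h2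
    · exact absurd h2 haw
    · exact h2
  exact hnd.2.2 a (start_mem_support _) a had rfl

end Contract

section SetMenger

variable [Fintype V] [DecidableEq V]

lemma setMenger_noEdge (G : SimpleGraph V) (hE : ∀ a b : V, ¬ G.Adj a b)
    (A B : Set V) (k : ℕ) (hsep : ∀ S : Set V, Sep G A B S → k ≤ S.ncard) :
    DisjWalks G A B k := by
  have hAB : Sep G A B (A ∩ B) := by
    intro a b ha hb W
    cases W with
    | nil => exact ⟨a, ⟨ha, hb⟩, start_mem_support _⟩
    | cons h _ => exact absurd h (hE _ _)
  obtain ⟨f, hinj, hmem⟩ := exists_inj_of_le_ncard (hsep _ hAB) (Set.toFinite _)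
  refine ⟨f, f, fun _ => Walk.nil, fun i => (hmem i).1, fun i => (hmem i).2, ?_⟩
  intro i j hij w hwi hwj
  simp only [support_nil, List.mem_singleton] at hwi hwj
  subst hwi
  exact hij (hinj hwj)

theorem setMengerAux :
    ∀ (n : ℕ) (G : SimpleGraph V), G.edgeSet.ncard ≤ n →
    ∀ (A B : Set V) (k : ℕ), (∀ S : Set V, Sep G A B S → k ≤ S.ncard) →
    DisjWalks G A B k := by
  intro n
  induction n with
  | zero =>
    intro G hG A B k hsep
    refine setMenger_noEdge G ?_ A B k hsep
    intro a b hab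
    have h0 : G.edgeSet = ∅ := (Set.ncard_eq_zero (Set.toFinite _)).mp (Nat.le_zero.mp hG)
    exact absurd ((mem_edgeSet G).mpr hab) (h0 ▸ Set.notMem_empty _)
  | succ n ih =>
    intro G hG A B k hsep
    by_cases hEx : ∃ x y, G.Adj x y
    swap
    · push_neg at hEx
      exact setMenger_noEdge G hEx A B k hsep
    obtain ⟨x, y, hxy⟩ := hEx
    by_cases hsmall : ∃ Y : Set V,
        Sep (contract G x y) (rmap x y '' A) (rmap x y '' B) Y ∧ Y.ncard < k
    · -- deletion branch
      obtain ⟨Y, hYsep, hYk⟩ := hsmall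
      have hxY : x ∈ Y := by
        by_contra hxY
        have hYsepG : Sep G A B Y := by
          intro a b ha hb W
          obtain ⟨W₁, hW₁⟩ := contract_project (x := x) (y := y) W
          obtain ⟨s, hsY, hs⟩ := hYsep _ _ ⟨a, ha, rfl⟩ ⟨b, hb, rfl⟩ W₁
          obtain ⟨z', hz', hz'r⟩ := hW₁ s hs
          have hz's : z' = s := by
            by_cases hzy : z' = y
            · exfalso
              apply hxY
              rw [hzy, rmap_y] at hz'r
              rw [hz'r]
              exact hsY
            · rw [← hz'r]
              exact (if_neg hzy).symm
          exact ⟨s, hsY, hz's ▸ hz'⟩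
        exact absurd (hsep Y hYsepG) (not_le.mpr hYk)
      set X : Set V := insert x (insert y (Y \ {x})) with hXdef
      have hxX : x ∈ X := Set.mem_insert _ _
      have hyX : y ∈ X := Set.mem_insert_of_mem _ (Set.mem_insert _ _)
      have hXsub : ∀ z ∈ Y, z ∈ X := by
        intro z hz
        by_cases hzx : z = x
        · exact hzx ▸ hxX
        · exact Set.mem_insert_of_mem _ (Set.mem_insert_of_mem _ ⟨hz, hzx⟩)
      have hXsep : Sep G A B X := by
        intro a b ha hb W
        obtain ⟨W₁, hW₁⟩ := contract_project (x := x) (y := y) W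
        obtain ⟨s, hsY, hs⟩ := hYsep _ _ ⟨a, ha, rfl⟩ ⟨b, hb, rfl⟩ W₁
        obtain ⟨z', hz', hz'r⟩ := hW₁ s hs
        refine ⟨z', ?_, hz'⟩
        by_cases hzy : z' = y
        · exact hzy ▸ hyX
        · have : z' = s := by
            rw [← hz'r]
            exact (if_neg hzy).symm
          exact hXsub z' (this ▸ hsY)
      have hXk : X.ncard = k := by
        refine le_antisymm ?_ (hsep X hXsep)
        have h1 : (Y \ {x}).ncard = Y.ncard - 1 :=
          Set.ncard_diff_singleton_of_mem hxY
        have h2 : X.ncard ≤ (Y \ {x}).ncard + 2 := by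
          rw [hXdef]
          have ha := Set.ncard_insert_le x (insert y (Y \ {x}))
          have hb := Set.ncard_insert_le y (Y \ {x})
          omega
        have h3 : 0 < Y.ncard := (Set.ncard_pos (Set.toFinite _)).mpr ⟨x, hxY⟩
        omega
      have hG₂le : G.deleteEdges {s(x, y)} ≤ G := deleteEdges_le _
      set G₂ := G.deleteEdges {s(x, y)} with hG₂def
      have hG₂n : G₂.edgeSet.ncard ≤ n := by
        have he : G₂.edgeSet = G.edgeSet \ {s(x, y)} := edgeSet_deleteEdges _
        have hlt := Set.ncard_diff_singleton_lt_of_mem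
          ((mem_edgeSet G).mpr hxy) (Set.toFinite _)
        rw [he]
        omega
      have hAXsep : ∀ S : Set V, Sep G₂ A X S → k ≤ S.ncard := by
        intro S hS
        refine hsep S ?_
        intro a b ha hb W
        obtain ⟨s0, hs0X, hs0⟩ := hXsep a b ha hb W
        obtain ⟨z, hzX, W', hWsub, hWe, hfirst⟩ := exists_firstHit W ⟨s0, hs0, hs0X⟩
        have hnoe : ∀ e ∈ W'.edges, e ∉ ({s(x, y)} : Set (Sym2 V)) := by
          intro e he hmem
          rw [Set.mem_singleton_iff] at hmem
          subst hmem
          have hx' := hfirst x (W'.fst_mem_support_of_mem_edges he) hxX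
          have hy' := hfirst y (W'.snd_mem_support_of_mem_edges he) hyX
          exact hxy.ne (hx'.trans hy'.symm)
        obtain ⟨W₂, hW₂⟩ := walk_toDeleteEdges _ W' hnoe
        obtain ⟨s, hsS, hs⟩ := hS a z ha hzX W₂
        exact ⟨s, hsS, hWsub s (by rw [← hW₂]; exact hs)⟩
      have hXBsep : ∀ S : Set V, Sep G₂ X B S → k ≤ S.ncard := by
        intro S hS
        refine hsep S ?_
        intro a b ha hb W
        obtain ⟨s0, hs0X, hs0⟩ := hXsep a b ha hb W
        obtain ⟨z, hzX, W', hWsub, hWe, hfirst⟩ := exists_firstHit W.reverse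
          ⟨s0, by rw [support_reverse, List.mem_reverse]; exact hs0, hs0X⟩
        have hnoe : ∀ e ∈ W'.edges, e ∉ ({s(x, y)} : Set (Sym2 V)) := by
          intro e he hmem
          rw [Set.mem_singleton_iff] at hmem
          subst hmem
          have hx' := hfirst x (W'.fst_mem_support_of_mem_edges he) hxX
          have hy' := hfirst y (W'.snd_mem_support_of_mem_edges he) hyX
          exact hxy.ne (hx'.trans hy'.symm)
        obtain ⟨W₂, hW₂⟩ := walk_toDeleteEdges _ W' hnoe
        obtain ⟨s, hsS, hs⟩ := hS z b hzX hb W₂.reverse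
        refine ⟨s, hsS, ?_⟩
        rw [support_reverse, List.mem_reverse, hW₂] at hs
        have := hWsub s hs
        rw [support_reverse, List.mem_reverse] at this
        exact this
      obtain ⟨aW, zW, Wk, haW, hzW, hdW⟩ := ih G₂ hG₂n A X k hAXsep
      obtain ⟨tQ, bQ, Qk, htQ, hbQ, hdQ⟩ := ih G₂ hG₂n X B k hXBsep
      have hPex : ∀ i, ∃ (z : V) (_ : z ∈ X) (P : G₂.Walk (aW i) z),
          P.IsPath ∧ (∀ s ∈ P.support, s ∈ (Wk i).support) ∧
          (∀ s ∈ P.support, s ∈ X → s = z) := by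
        intro i
        obtain ⟨z, hzX, W', hWsub, _, hfirst⟩ :=
          exists_firstHit (Wk i) ⟨zW i, end_mem_support _, hzW i⟩
        exact ⟨z, hzX, W'.bypass, bypass_isPath _,
          fun s hs => hWsub s (support_bypass_subset _ hs),
          fun s hs hsX => hfirst s (support_bypass_subset _ hs) hsX⟩
      choose z hzX P hPpath hPsub hPfirst using hPex
      have hQex : ∀ j, ∃ (t : V) (_ : t ∈ X) (Q : G₂.Walk t (bQ j)),
          Q.IsPath ∧ (∀ s ∈ Q.support, s ∈ (Qk j).support) ∧
          (∀ s ∈ Q.support, s ∈ X → s = t) := by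
        intro j
        obtain ⟨t, htX, W', hWsub, _, hfirst⟩ := exists_firstHit (Qk j).reverse
          ⟨tQ j, by rw [support_reverse, List.mem_reverse]; exact start_mem_support _, htQ j⟩
        refine ⟨t, htX, W'.bypass.reverse, (bypass_isPath _).reverse, ?_, ?_⟩
        · intro s hs
          rw [support_reverse, List.mem_reverse] at hs
          have := hWsub s (support_bypass_subset _ hs)
          rw [support_reverse, List.mem_reverse] at this
          exact this
        · intro s hs hsX
          rw [support_reverse, List.mem_reverse] at hs
          exact hfirst s (support_bypass_subset _ hs) hsX
      choose t htX Q hQpath hQsub hQfirst using hQex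
      have hzinj : Function.Injective z := by
        intro i j hij
        by_contra hne
        refine hdW i j hne (z i) (hPsub i _ (end_mem_support _)) ?_
        rw [hij]
        exact hPsub j _ (end_mem_support _)
      have htinj : Function.Injective t := by
        intro i j hij
        by_contra hne
        refine hdQ i j hne (t i) (hQsub i _ (start_mem_support _)) ?_
        rw [hij]
        exact hQsub j _ (start_mem_support _)
      have hzsurj := surj_of_inj_ncard hXk (Set.toFinite _) t htinj htX
      have hσex : ∀ i, ∃ j, t j = z i := fun i => hzsurj (z i) (hzX i)
      choose σ hσ using hσex
      have hσinj : Function.Injective σ := fun i j hij =>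
        hzinj (by rw [← hσ i, ← hσ j, hij])
      have cross : ∀ i j w, w ∈ (P i).support → w ∈ (Q j).support →
          w = z i ∧ w = t j := by
        intro i j w hwP hwQ
        by_cases hwX : w ∈ X
        · exact ⟨hPfirst i w hwP hwX, hQfirst j w hwQ hwX⟩
        exfalso
        have hzw : z i ≠ w := fun h => hwX (h ▸ hzX i)
        have htw : t j ≠ w := fun h => hwX (h ▸ htX j)
        have h1 : z i ∉ ((P i).takeUntil w hwP).support :=
          not_mem_takeUntil (hPpath i) hwP hzw
        have h2 : t j ∉ ((Q j).dropUntil w hwQ).support :=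
          not_mem_dropUntil (hQpath j) hwQ htw
        have hCX : ∀ s ∈ (((P i).takeUntil w hwP).append
            ((Q j).dropUntil w hwQ)).support, s ∉ X := by
          intro s hs hsX
          rw [mem_support_append_iff] at hs
          rcases hs with hs | hs
          · have heq : s = z i := hPfirst i s (support_takeUntil_subset _ _ hs) hsX
            exact h1 (heq ▸ hs)
          · have heq : s = t j := hQfirst j s (support_dropUntil_subset _ _ hs) hsX
            exact h2 (heq ▸ hs)
        obtain ⟨C', hC'⟩ := exists_walk_le hG₂le
          (((P i).takeUntil w hwP).append ((Q j).dropUntil w hwQ))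
        obtain ⟨s, hsX, hs⟩ := hXsep (aW i) (bQ j) (haW i) (hbQ j) C'
        exact hCX s (by rw [← hC']; exact hs) hsX
      have hRG : ∀ i, ∃ W : G.Walk (aW i) (bQ (σ i)),
          W.support = ((P i).append ((Q (σ i)).copy (hσ i) rfl)).support :=
        fun i => exists_walk_le hG₂le _
      choose RG hRGs using hRG
      have hRsup : ∀ i s, s ∈ (RG i).support →
          s ∈ (P i).support ∨ s ∈ (Q (σ i)).support := by
        intro i s hs
        rw [hRGs i, mem_support_append_iff] at hs
        rcases hs with hs | hs
        · exact Or.inl hs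
        · rw [support_copy] at hs
          exact Or.inr hs
      refine ⟨aW, fun i => bQ (σ i), RG, haW, fun i => hbQ (σ i), ?_⟩
      intro i j hij w hwi hwj
      rcases hRsup i w hwi with hwi' | hwi' <;> rcases hRsup j w hwj with hwj' | hwj'
      · exact hdW i j hij w (hPsub i w hwi') (hPsub j w hwj')
      · obtain ⟨h1, h2⟩ := cross i (σ j) w hwi' hwj'
        exact hij (hzinj (h1.symm.trans (h2.trans (hσ j))))
      · obtain ⟨h1, h2⟩ := cross j (σ i) w hwj' hwi'
        exact hij (hzinj (h1.symm.trans (h2.trans (hσ i)))).symm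
      · exact hdQ (σ i) (σ j) (fun h => hij (hσinj h)) w
          (hQsub _ w hwi') (hQsub _ w hwj')
    · -- contraction branch
      push_neg at hsmall
      have hconk : ∀ S, Sep (contract G x y) (rmap x y '' A) (rmap x y '' B) S →
          k ≤ S.ncard := hsmall
      have hcn : (contract G x y).edgeSet.ncard ≤ n := by
        have := contract_edge_lt (G := G) hxy
        omega
      obtain ⟨a₁, b₁, W₁, hA₁, hB₁, hd₁⟩ := ih (contract G x y) hcn _ _ k hconk
      choose a' ha'A ha'r using fun i => hA₁ i
      choose b' hb'B hb'r using fun i => hB₁ i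
      choose W hW using fun i => contract_lift hxy (W₁ i) (a' i) (b' i) (ha'r i) (hb'r i)
      exact ⟨a', b', W, ha'A, hb'B, fun i j hij w hwi hwj =>
        hd₁ i j hij (rmap x y w) (hW i w hwi) (hW j w hwj)⟩

/-- Menger's theorem, set version, with walks. -/
theorem setMenger (G : SimpleGraph V) (A B : Set V) (k : ℕ)
    (hsep : ∀ S : Set V, Sep G A B S → k ≤ S.ncard) : DisjWalks G A B k :=
  setMengerAux G.edgeSet.ncard G le_rfl A B k hsep

end SetMenger

/-- The graph `G` with all edges at `u` and `v` removed. -/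
@[reducible] def avoid (G : SimpleGraph V) (u v : V) : SimpleGraph V where
  Adj a b := G.Adj a b ∧ a ≠ u ∧ a ≠ v ∧ b ≠ u ∧ b ≠ v
  symm := ⟨by
    rintro a b ⟨h, h1, h2, h3, h4⟩
    exact ⟨h.symm, h3, h4, h1, h2⟩⟩
  loopless := ⟨fun a h => h.1.ne rfl⟩

lemma avoid_le (G : SimpleGraph V) (u v : V) : avoid G u v ≤ G := fun _ _ h => h.1

lemma avoid_support {G : SimpleGraph V} {u v : V} :
    ∀ {a b : V} (W : (avoid G u v).Walk a b), a ≠ u → a ≠ v →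
      ∀ z ∈ W.support, z ≠ u ∧ z ≠ v := by
  intro a b W
  induction W with
  | nil =>
    intro h1 h2 z hz
    simp only [support_nil, List.mem_singleton] at hz
    exact hz ▸ ⟨h1, h2⟩
  | @cons a c b h W ih =>
    intro h1 h2 z hz
    rw [support_cons, List.mem_cons] at hz
    rcases hz with rfl | hz
    · exact ⟨h1, h2⟩
    · exact ih h.2.2.2.1 h.2.2.2.2 z hz

lemma walk_avoid {G : SimpleGraph V} {u v : V} :
    ∀ {a b : V} (W : G.Walk a b), (∀ z ∈ W.support, z ≠ u ∧ z ≠ v) →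
    ∃ W' : (avoid G u v).Walk a b, W'.support = W.support := by
  intro a b W
  induction W with
  | nil => exact fun _ => ⟨Walk.nil, rfl⟩
  | @cons a c b h W ih =>
    intro hz
    obtain ⟨W', hW'⟩ := ih fun z hzW => hz z (by simp [hzW])
    have hc := hz c (by simp)
    have ha := hz a (by simp)
    exact ⟨Walk.cons ⟨h, ha.1, ha.2, hc.1, hc.2⟩ W', by simp [hW']⟩

/-- Menger, local vertex version, nonadjacent case. -/
theorem localMenger [Fintype V] (G : SimpleGraph V) (u v : V) (huv : u ≠ v)
    (hna : ¬ G.Adj u v) (k : ℕ)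
    (hsep : ∀ S : Set V, u ∉ S → v ∉ S →
      (∀ W : G.Walk u v, ∃ s ∈ S, s ∈ W.support) → k ≤ S.ncard) :
    HasIDPaths G u v k := by
  classical
  set A : Set V := {w | G.Adj u w} with hA
  set B : Set V := {w | G.Adj v w} with hB
  have hsep' : ∀ S : Set V, Sep (avoid G u v) A B S → k ≤ S.ncard := by
    intro S hS
    have hkey : ∀ W : G.Walk u v, ∃ s ∈ S \ {u, v}, s ∈ W.support := by
      intro W
      -- pass to a path
      suffices h : ∃ s ∈ S \ {u, v}, s ∈ W.bypass.support by
        obtain ⟨s, hs1, hs2⟩ := h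
        exact ⟨s, hs1, support_bypass_subset _ hs2⟩
      have hP : W.bypass.IsPath := bypass_isPath _
      obtain ⟨c, hac, Q, hQeq⟩ := Walk.exists_eq_cons_of_ne huv W.bypass
      rw [hQeq] at hP ⊢
      rw [cons_isPath_iff] at hP
      have hcv : c ≠ v := by
        rintro rfl
        exact hna hac
      obtain ⟨d, hvd, R, hReq⟩ := Walk.exists_eq_cons_of_ne (Ne.symm hcv) Q.reverse
      have hRsup : R.support ≠ [] := support_ne_nil _
      have hvR : v ∉ R.support := by
        intro hv
        have := hP.1.reverse.support_nodup
        rw [hReq] at this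
        simp only [support_cons] at this
        exact (List.nodup_cons.mp this).1 hv
      have huR : u ∉ R.support := by
        intro hu
        apply hP.2
        have : u ∈ Q.reverse.support := by
          rw [hReq, support_cons]
          exact List.mem_cons_of_mem _ hu
        rwa [support_reverse, List.mem_reverse] at this
      have hall : ∀ z ∈ R.support, z ≠ u ∧ z ≠ v :=
        fun z hz => ⟨fun h => huR (h ▸ hz), fun h => hvR (h ▸ hz)⟩
      obtain ⟨R', hR'⟩ := walk_avoid R hall
      have hdB : d ∈ B := hvd
      have hcA : c ∈ A := hac
      obtain ⟨s, hsS, hs⟩ := hS c d hcA hdB R'.reverse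
      rw [support_reverse, List.mem_reverse, hR'] at hs
      refine ⟨s, ⟨hsS, ?_⟩, ?_⟩
      · simp only [Set.mem_insert_iff, Set.mem_singleton_iff]
        push_neg
        exact hall s hs
      · rw [support_cons]
        refine List.mem_cons_of_mem _ ?_
        have : s ∈ Q.reverse.support := by
          rw [hReq, support_cons]
          exact List.mem_cons_of_mem _ hs
        rwa [support_reverse, List.mem_reverse] at this
    have hk := hsep (S \ {u, v}) (fun h => h.2 (by simp)) (fun h => h.2 (by simp)) hkey
    exact le_trans hk (Set.ncard_le_ncard Set.diff_subset (Set.toFinite _))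
  obtain ⟨a, b, Wm, haA, hbB, hd⟩ := setMenger (avoid G u v) A B k hsep'
  have hau : ∀ i, a i ≠ u ∧ a i ≠ v := by
    intro i
    have h := haA i
    exact ⟨fun he => G.irrefl (he ▸ h), fun he => hna (he ▸ h)⟩
  have hsupm : ∀ i, ∀ z ∈ (Wm i).support, z ≠ u ∧ z ≠ v :=
    fun i => avoid_support (Wm i) (hau i).1 (hau i).2
  -- convert to paths in G
  have hGp : ∀ i, ∃ p : G.Walk (a i) (b i), p.IsPath ∧
      ∀ z ∈ p.support, z ∈ (Wm i).support := by
    intro i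
    obtain ⟨W', hW'⟩ := exists_walk_le (avoid_le G u v) (Wm i)
    exact ⟨W'.bypass, bypass_isPath _,
      fun z hz => hW' ▸ support_bypass_subset _ hz⟩
  choose p hp hpsub using hGp
  have hpu : ∀ i, u ∉ (p i).support :=
    fun i hu => (hsupm i u (hpsub i u hu)).1 rfl
  have hpv : ∀ i, v ∉ (p i).support :=
    fun i hv => (hsupm i v (hpsub i v hv)).2 rfl
  -- build the final paths
  have hFpath : ∀ i, (Walk.cons (haA i) ((p i).concat (hbB i).symm)).IsPath := by
    intro i
    rw [cons_isPath_iff]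
    constructor
    · rw [← isPath_reverse_iff, reverse_concat]
      rw [cons_isPath_iff, isPath_reverse_iff]
      refine ⟨hp i, ?_⟩
      rw [support_reverse, List.mem_reverse]
      exact hpv i
    · rw [support_concat, List.mem_append]
      rintro (h | h)
      · exact hpu i h
      · rw [List.mem_singleton] at h
        exact huv h
  refine ⟨fun i => ⟨Walk.cons (haA i) ((p i).concat (hbB i).symm), hFpath i⟩, ?_, ?_⟩
  · intro i j hij
    by_contra hne
    rw [Subtype.mk_eq_mk] at hij
    have h1 : a i ∈ (p j).support := by
      have : a i ∈ (Walk.cons (haA j) ((p j).concat (hbB j).symm)).support := by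
        rw [← hij]
        simp [support_cons, support_concat]
      rw [support_cons, List.mem_cons, support_concat,
        List.mem_append, List.mem_singleton] at this
      rcases this with h | h | h
      · exact absurd h (hau i).1
      · exact h
      · exact absurd h (hau i).2
    exact hd i j hne (a i) (hpsub i _ (start_mem_support _)) (hpsub j _ h1)
  · intro i j hij w hwi hwj
    simp only [support_cons, List.mem_cons, support_concat, List.concat_eq_append,
      List.mem_append, List.mem_singleton] at hwi hwj
    rcases hwi with rfl | hwi | rfl | hwi
    · exact Or.inl rfl
    · rcases hwj with rfl | hwj | rfl | hwj
      · exact Or.inl rfl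
      · exact absurd (hd i j hij w (hpsub i w hwi) (hpsub j w hwj)) not_false
      · exact Or.inr rfl
      · exact absurd hwj List.not_mem_nil
    · exact Or.inr rfl
    · exact absurd hwi List.not_mem_nil

/-- Choosing a good index avoiding two kinds of badness. -/
lemma exists_good_index {k m : ℕ} {S : Set V} (x₀ : V) (hSfin : S.Finite)
    (hmk : S.ncard + m < k)
    (f g : Fin k → Prop) (R : Fin k → V → Prop)
    (hf : ∀ i, f i → ∃ s ∈ S, R i s)
    (hR : ∀ i j s, i ≠ j → R i s → R j s → False)
    (hg : ∀ i j, i ≠ j → g i → g j → False)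
    (hgm : (∃ i, g i) → 1 ≤ m) :
    ∃ i, ¬ f i ∧ ¬ g i := by
  classical
  by_contra hno
  push_neg at hno
  have hfg : ∀ i, f i ∨ g i := fun i => (em (f i)).imp id (fun h => hno i h)
  set t : Fin k → V := fun i => if h : f i then (hf i h).choose else x₀ with ht
  have htS : ∀ i, f i → t i ∈ S := by
    intro i h
    simp only [ht, dif_pos h]
    exact (hf i h).choose_spec.1
  have htR : ∀ i, f i → R i (t i) := by
    intro i h
    simp only [ht, dif_pos h]
    exact (hf i h).choose_spec.2
  have hinj : ∀ i j, f i → f j → t i = t j → i = j := by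
    intro i j hi hj hij
    by_contra hne
    exact hR i j (t i) hne (htR i hi) (hij ▸ htR j hj)
  by_cases hex : ∃ i₀, g i₀
  · obtain ⟨i₀, hi₀⟩ := hex
    have hm1 := hgm ⟨i₀, hi₀⟩
    have hcard : (Finset.univ.erase i₀).card ≤ hSfin.toFinset.card := by
      apply Finset.card_le_card_of_injOn t
      · intro i hi
        rw [Finset.mem_coe, Finset.mem_erase] at hi
        exact hSfin.mem_toFinset.mpr (htS i
          ((hfg i).resolve_right (fun hgi => hg i i₀ hi.1 hgi hi₀)))
      · intro i hi j hj hij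
        rw [Finset.mem_coe, Finset.mem_erase] at hi hj
        exact hinj i j
          ((hfg i).resolve_right (fun hgi => hg i i₀ hi.1 hgi hi₀))
          ((hfg j).resolve_right (fun hgj => hg j i₀ hj.1 hgj hi₀)) hij
    rw [Finset.card_erase_of_mem (Finset.mem_univ _), Finset.card_univ, Fintype.card_fin,
      ← Set.ncard_eq_toFinset_card _ hSfin] at hcard
    omega
  · push_neg at hex
    have hcard : (Finset.univ : Finset (Fin k)).card ≤ hSfin.toFinset.card := by
      apply Finset.card_le_card_of_injOn t
      · intro i _
        exact hSfin.mem_toFinset.mpr (htS i ((hfg i).resolve_right (hex i)))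
      · intro i _ j _ hij
        exact hinj i j ((hfg i).resolve_right (hex i)) ((hfg j).resolve_right (hex j)) hij
    rw [Finset.card_univ, Fintype.card_fin, ← Set.ncard_eq_toFinset_card _ hSfin] at hcard
    omega

/-- Splicing a walk of `G' ⊔ J` into a walk of `G'.deleteEdges D`, avoiding `S`. -/
lemma splice {G' J : SimpleGraph V} {D : Set (Sym2 V)} {S : Set V}
    (hrepl : ∀ a b : V, J.Adj a b → s(a, b) ∉ D → a ∉ S → b ∉ S →
      ∃ W : (G'.deleteEdges D).Walk a b, ∀ z ∈ W.support, z ∉ S) :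
    ∀ {a b : V} (W : (G' ⊔ J).Walk a b), (∀ z ∈ W.support, z ∉ S) →
      (∀ e ∈ W.edges, e ∉ D) →
      ∃ W' : (G'.deleteEdges D).Walk a b, ∀ z ∈ W'.support, z ∉ S := by
  intro a b W
  induction W with
  | nil => exact fun hs _ => ⟨Walk.nil, fun z hz => hs z (by simpa using hz)⟩
  | @cons a c b h W ih =>
    intro hs he
    obtain ⟨W₂, hW₂⟩ := ih (fun z hz => hs z (by simp [hz])) (fun e hee => he e (by simp [hee]))
    have haD : s(a, c) ∉ D := he _ (by simp)
    have haS : a ∉ S := hs a (by simp)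
    have hcS : c ∉ S := hs c (by simp)
    rcases (sup_adj _ _ _ _).mp h with h' | h'
    · refine ⟨Walk.cons (deleteEdges_adj.mpr ⟨h', haD⟩) W₂, ?_⟩
      intro z hz
      rw [support_cons, List.mem_cons] at hz
      rcases hz with rfl | hz
      · exact haS
      · exact hW₂ z hz
    · obtain ⟨Wac, hWac⟩ := hrepl a c h' haD haS hcS
      refine ⟨Wac.append W₂, ?_⟩
      intro z hz
      rw [mem_support_append_iff] at hz
      rcases hz with hz | hz
      · exact hWac z hz
      · exact hW₂ z hz

end MengerAux

open MengerAux in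
/-- Let `U` be a set of nodes of `G'` and `J` a set of edges with both endpoints in `U`.
If `G'[U] ∪ J` is `k`-connected and for every edge `uv ∈ J` the graph `G'` contains
`k` internally disjoint `u`-`v` paths, then `G'` is `k`-`U`-connected. -/
theorem kU_connected_of_augmented_induced
    {V : Type*} [Fintype V] (G' : SimpleGraph V) (U : Set V) (k : ℕ)
    (J : SimpleGraph V) (hJU : ∀ u v : V, J.Adj u v → u ∈ U ∧ v ∈ U)
    (hconn : KConnected ((G' ⊔ J).induce U) k)
    (hpaths : ∀ u v : V, J.Adj u v → HasIDPaths G' u v k) :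
    ∀ u v : V, u ∈ U → v ∈ U → u ≠ v → HasIDPaths G' u v k := by
  classical
  intro u v hu hv huv
  rcases Nat.eq_zero_or_pos k with rfl | hk0
  · exact ⟨Fin.elim0, fun i => i.elim0, fun i => i.elim0⟩
  have main : ∀ (D : Set (Sym2 V)) (m : ℕ), (∀ e ∈ D, e = s(u, v) ∧ 1 ≤ m) →
      (1 ≤ m → s(u, v) ∈ D) →
      ∀ S : Set V, u ∉ S → v ∉ S → S.ncard + m < k →
      ∃ W : (G'.deleteEdges D).Walk u v, ∀ z ∈ W.support, z ∉ S := by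
    intro D m hD hDm S huS hvS hmk
    obtain ⟨Pf, hPinj, hPID⟩ := hconn ⟨u, hu⟩ ⟨v, hv⟩
      (fun h => huv (congrArg Subtype.val h))
    obtain ⟨i, hbad1, hbad2⟩ := exists_good_index (V := V) u (Set.toFinite S) hmk
      (f := fun i => ∃ z ∈ (Pf i).val.support, (z : V) ∈ S)
      (g := fun i => s(⟨u, hu⟩, ⟨v, hv⟩) ∈ (Pf i).val.edges ∧ 1 ≤ m)
      (R := fun i s => s ∈ S ∧ ∃ z ∈ (Pf i).val.support, (z : V) = s)
      (fun i ⟨z, hz, hzS⟩ => ⟨(z : V), hzS, hzS, z, hz, rfl⟩)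
      (by
        rintro i j s hij ⟨hsS, z₁, hz₁, rfl⟩ ⟨-, z₂, hz₂, hz₂e⟩
        have hz12 : z₂ = z₁ := Subtype.ext hz₂e
        subst hz12
        rcases hPID i j hij z₂ hz₁ hz₂ with h | h
        · rw [h] at hsS
          exact huS hsS
        · rw [h] at hsS
          exact hvS hsS)
      (by
        rintro i j hij ⟨hei, -⟩ ⟨hej, -⟩
        obtain ⟨ha1, he1⟩ := path_eq_edge (Pf i).prop hei
        obtain ⟨ha2, he2⟩ := path_eq_edge (Pf j).prop hej
        exact hij (hPinj (Subtype.ext (he1.trans he2.symm))))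
      (fun ⟨i, hi⟩ => hi.2)
    set emb := (SimpleGraph.Embedding.induce U : (G' ⊔ J).induce U ↪g (G' ⊔ J)) with hemb
    set Wh : (G' ⊔ J).Walk u v := (Pf i).val.map emb.toHom with hWh
    have hWhsup : ∀ z ∈ Wh.support, ∃ z' ∈ (Pf i).val.support, ((z' : V) = z) := by
      intro z hz
      replace hz : z ∈ (Pf i).val.support.map emb.toHom := by
        rw [← Walk.support_map emb.toHom (Pf i).val]; exact hz
      obtain ⟨z', hz', rfl⟩ := List.mem_map.mp hz
      exact ⟨z', hz', rfl⟩
    have hWhS : ∀ z ∈ Wh.support, z ∉ S := by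
      intro z hz hzS
      obtain ⟨z', hz', rfl⟩ := hWhsup z hz
      exact hbad1 ⟨z', hz', hzS⟩
    have hWhD : ∀ e ∈ Wh.edges, e ∉ D := by
      intro e he heD
      obtain ⟨heuv, hm⟩ := hD e heD
      subst heuv
      replace he : s(u, v) ∈ (Pf i).val.edges.map (Sym2.map emb.toHom) := by
        rw [← Walk.edges_map emb.toHom (Pf i).val]; exact he
      obtain ⟨e₀, he₀, he₀e⟩ := List.mem_map.mp he
      apply hbad2
      refine ⟨?_, hm⟩
      induction e₀ with
      | _ z₁ z₂ =>
        rw [Sym2.map_pair_eq, Sym2.eq_iff] at he₀e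
        have hcase : (z₁ = (⟨u, hu⟩ : U) ∧ z₂ = (⟨v, hv⟩ : U)) ∨
            (z₁ = (⟨v, hv⟩ : U) ∧ z₂ = (⟨u, hu⟩ : U)) := by
          rcases he₀e with ⟨h1, h2⟩ | ⟨h1, h2⟩
          · exact Or.inl ⟨Subtype.ext h1, Subtype.ext h2⟩
          · exact Or.inr ⟨Subtype.ext h1, Subtype.ext h2⟩
        rcases hcase with ⟨rfl, rfl⟩ | ⟨rfl, rfl⟩
        · exact he₀
        · rwa [Sym2.eq_swap] at he₀
    have hrepl : ∀ a b : V, J.Adj a b → s(a, b) ∉ D → a ∉ S → b ∉ S →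
        ∃ W : (G'.deleteEdges D).Walk a b, ∀ z ∈ W.support, z ∉ S := by
      intro a b hJab haD haS hbS
      obtain ⟨Qf, hQinj, hQID⟩ := hpaths a b hJab
      obtain ⟨j, hb1, hb2⟩ := exists_good_index (V := V) u (Set.toFinite S) hmk
        (f := fun j => ∃ z ∈ (Qf j).val.support, z ∈ S)
        (g := fun j => (u ∈ (Qf j).val.support ∧ v ∈ (Qf j).val.support) ∧ 1 ≤ m)
        (R := fun j s => s ∈ S ∧ s ∈ (Qf j).val.support)
        (fun j ⟨z, hz, hzS⟩ => ⟨z, hzS, hzS, hz⟩)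
        (by
          rintro i' j' s hij ⟨hsS, hs1⟩ ⟨-, hs2⟩
          rcases hQID i' j' hij s hs1 hs2 with rfl | rfl
          · exact haS hsS
          · exact hbS hsS)
        (by
          rintro i' j' hij ⟨⟨hu1, hv1⟩, hm⟩ ⟨⟨hu2, hv2⟩, -⟩
          have huab : u = a ∨ u = b := hQID i' j' hij u hu1 hu2
          have hvab : v = a ∨ v = b := hQID i' j' hij v hv1 hv2
          apply haD
          have hab : s(a, b) = s(u, v) := by
            rcases huab with h1 | h1 <;> rcases hvab with h2 | h2
            · exact absurd (h1.trans h2.symm) huv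
            · rw [h1, h2]
            · rw [h1, h2, Sym2.eq_swap]
            · exact absurd (h1.trans h2.symm) huv
          rw [hab]
          exact hDm hm)
        (fun ⟨j', hj'⟩ => hj'.2)
      refine ?_
      have hQD : ∀ e ∈ (Qf j).val.edges, e ∉ D := by
        intro e he heD
        obtain ⟨heuv, hm⟩ := hD e heD
        subst heuv
        exact hb2 ⟨⟨Walk.fst_mem_support_of_mem_edges _ he,
          Walk.snd_mem_support_of_mem_edges _ he⟩, hm⟩
      obtain ⟨W₂, hW₂⟩ := walk_toDeleteEdges D (Qf j).val hQD
      refine ⟨W₂, ?_⟩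
      intro z hz
      rw [hW₂] at hz
      exact fun hzS => hb1 ⟨z, hz, hzS⟩
    exact splice hrepl Wh hWhS hWhD
  by_cases hadj : G'.Adj u v
  · -- adjacent case
    obtain ⟨k', rfl⟩ : ∃ k', k = k' + 1 := ⟨k - 1, by omega⟩
    have hna : ¬ (G'.deleteEdges {s(u, v)}).Adj u v := by
      rw [deleteEdges_adj]
      simp
    have hsepB : ∀ S : Set V, u ∉ S → v ∉ S →
        (∀ W : (G'.deleteEdges {s(u, v)}).Walk u v, ∃ s ∈ S, s ∈ W.support) →
        k' ≤ S.ncard := by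
      intro S huS hvS hSsep
      by_contra hlt
      push_neg at hlt
      obtain ⟨W, hW⟩ := main {s(u, v)} 1 (by simp) (by simp) S huS hvS (by omega)
      obtain ⟨s, hsS, hs⟩ := hSsep W
      exact hW s hs hsS
    obtain ⟨P2, hP2inj, hP2ID⟩ :=
      localMenger (G'.deleteEdges {s(u, v)}) u v huv hna k' hsepB
    have hle : G'.deleteEdges {s(u, v)} ≤ G' := deleteEdges_le _
    have hinj_id : Function.Injective (Hom.ofLE hle) := fun a b h => h
    have hid : ⇑(Hom.ofLE hle) = id := rfl
    set lift : (G'.deleteEdges {s(u, v)}).Path u v → G'.Path u v :=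
      SimpleGraph.Path.map (Hom.ofLE hle) hinj_id with hliftdef
    have hsupport : ∀ p : (G'.deleteEdges {s(u, v)}).Path u v,
        (lift p).val.support = p.val.support := by
      intro p
      show (Walk.map _ _).support = _
      rw [Walk.support_map, hid, List.map_id]
    have hedgesl : ∀ p : (G'.deleteEdges {s(u, v)}).Path u v,
        (lift p).val.edges = p.val.edges := by
      intro p
      show (Walk.map _ _).edges = _
      rw [Walk.edges_map, hid]
      simp [Sym2.map_id]
    set pe : G'.Path u v := SimpleGraph.Path.singleton hadj with hpe
    have hedge_ne : ∀ p : (G'.deleteEdges {s(u, v)}).Path u v, lift p ≠ pe := by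
      intro p hp
      have h1 : s(u, v) ∈ (lift p).val.edges := by
        rw [hp, hpe]
        simp [SimpleGraph.Path.singleton]
      rw [hedgesl p] at h1
      have h2 := p.val.edges_subset_edgeSet h1
      rw [edgeSet_deleteEdges] at h2
      exact h2.2 rfl
    refine ⟨Fin.cases pe (fun i => lift (P2 i)), ?_, ?_⟩
    · intro i j hij
      rcases Fin.eq_zero_or_eq_succ i with rfl | ⟨i', rfl⟩ <;>
        rcases Fin.eq_zero_or_eq_succ j with rfl | ⟨j', rfl⟩
      · rfl
      · simp only [Fin.cases_zero, Fin.cases_succ] at hij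
        exact absurd hij.symm (hedge_ne (P2 j'))
      · simp only [Fin.cases_zero, Fin.cases_succ] at hij
        exact absurd hij (hedge_ne (P2 i'))
      · simp only [Fin.cases_succ] at hij
        rw [hliftdef] at hij
        exact congrArg Fin.succ (hP2inj (SimpleGraph.Path.map_injective hinj_id u v hij))
    · intro i j hij w hwi hwj
      rcases Fin.eq_zero_or_eq_succ i with rfl | ⟨i', rfl⟩
      · simp only [Fin.cases_zero] at hwi
        rw [hpe] at hwi
        simpa [SimpleGraph.Path.singleton, Walk.support_cons] using hwi
      · rcases Fin.eq_zero_or_eq_succ j with rfl | ⟨j', rfl⟩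
        · simp only [Fin.cases_zero] at hwj
          rw [hpe] at hwj
          simpa [SimpleGraph.Path.singleton, Walk.support_cons] using hwj
        · simp only [Fin.cases_succ] at hwi hwj
          rw [hsupport] at hwi hwj
          exact hP2ID i' j' (fun h => hij (by rw [h])) w hwi hwj
  · -- nonadjacent case
    apply localMenger G' u v huv hadj k
    intro S huS hvS hSsep
    by_contra hlt
    push_neg at hlt
    obtain ⟨W, hW⟩ := main ∅ 0 (by simp) (fun h => absurd h (by omega)) S huS hvS (by omega)
    obtain ⟨W', hW'⟩ := exists_walk_le (deleteEdges_le ∅) W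
    obtain ⟨s, hsS, hs⟩ := hSsep W'
    rw [hW'] at hs
    exact hW s hs hsS
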